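/- arXiv:1311.2215 — 2 statements merged into one kernel-verified Lean document; each statement's English description precedes it below -/
import Mathlib

section
/- Let S be a finite abelian semigroup with an absorbing element 0_S and let g be a Lie algebra. Then the quotient of the S-expanded Lie algebra S ⊗ g by the ideal 0_S ⊗ g is a Lie algebra, and 0_S ⊗ g is indeed a Lie ideal of S ⊗ g. -/
/-- The bracket of the `S`-expanded Lie algebra `S ⊗ g`, modelled on `S →₀ g`:
`[λα ⊗ x, λβ ⊗ y] = (λα λβ) ⊗ [x, y]`, extended bilinearly. -/
noncomputable def expBracket {S : Type*} [Mul S] {L : Type*} [LieRing L]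
    (f g : S →₀ L) : S →₀ L :=
  f.sum fun a x => g.sum fun b y => Finsupp.single (a * b) ⁅x, y⁆

section aux

variable {S : Type*} [Mul S] {L : Type*} [LieRing L]

lemma expB_zero_left (g : S →₀ L) : expBracket 0 g = 0 := by
  simp [expBracket]

lemma expB_zero_right (f : S →₀ L) : expBracket f 0 = 0 := by
  simp [expBracket]

lemma expB_add_left (f f' g : S →₀ L) :
    expBracket (f + f') g = expBracket f g + expBracket f' g := by
  unfold expBracket
  rw [Finsupp.sum_add_index']
  · intro a; simp
  · intro a x x'; simp [add_lie, Finsupp.single_add, Finsupp.sum_add]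

lemma expB_add_right (f g g' : S →₀ L) :
    expBracket f (g + g') = expBracket f g + expBracket f g' := by
  unfold expBracket
  rw [← Finsupp.sum_add]
  apply Finsupp.sum_congr
  intro a _
  rw [Finsupp.sum_add_index']
  · intro b; simp
  · intro b y y'; simp [lie_add, Finsupp.single_add]

lemma expB_single_single (a b : S) (x y : L) :
    expBracket (Finsupp.single a x) (Finsupp.single b y)
      = Finsupp.single (a * b) ⁅x, y⁆ := by
  unfold expBracket
  rw [Finsupp.sum_single_index, Finsupp.sum_single_index]
  · simp
  · simp

end aux

section comm

variable {S : Type*} [CommSemigroup S] {L : Type*} [LieRing L]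

lemma expB_antisym (f g : S →₀ L) : expBracket f g + expBracket g f = 0 := by
  unfold expBracket
  rw [Finsupp.sum_comm g f]
  rw [← Finsupp.sum_add]
  rw [← (show (f.sum fun _ _ => (0 : S →₀ L)) = 0 from Finset.sum_const_zero)]
  apply Finsupp.sum_congr
  intro a _
  rw [← Finsupp.sum_add]
  rw [← (show (g.sum fun _ _ => (0 : S →₀ L)) = 0 from Finset.sum_const_zero)]
  apply Finsupp.sum_congr
  intro b _
  rw [mul_comm b a, ← lie_skew, Finsupp.single_neg, neg_add_cancel]

lemma expB_self (f : S →₀ L) : expBracket f f = 0 := by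
  induction f using Finsupp.induction with
  | zero => exact expB_zero_left 0
  | single_add a x f ha hx ih =>
      rw [expB_add_left, expB_add_right, expB_add_right, ih,
        expB_single_single, add_zero, add_assoc, expB_antisym (Finsupp.single a x) f]
      simp

end comm

/-- If `0_S` is an absorbing element of the abelian semigroup `S`, then `0_S ⊗ g` is a
Lie ideal of the `S`-expanded Lie algebra `S ⊗ g`, and the bracket descends to the
quotient `(S ⊗ g)/(0_S ⊗ g)`, where it is well defined, alternating and satisfies the
Jacobi identity; hence the quotient is a Lie algebra. -/
theorem zero_reduction_ideal_and_quotient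
    {S : Type*} [CommSemigroup S] {L : Type*} [LieRing L]
    (z : S) (hz : ∀ a : S, z * a = z) :
    let I : Set (S →₀ L) := {f | ∃ x : L, f = Finsupp.single z x}
    -- `0_S ⊗ g` is a Lie ideal:
    (∀ f : S →₀ L, ∀ g ∈ I, expBracket f g ∈ I ∧ expBracket g f ∈ I) ∧
    -- the bracket is well defined on the quotient by `I`:
    (∀ f₁ f₂ g₁ g₂ : S →₀ L, f₁ - f₂ ∈ I → g₁ - g₂ ∈ I →
      expBracket f₁ g₁ - expBracket f₂ g₂ ∈ I) ∧
    -- and the quotient bracket is alternating and satisfies the Jacobi identity: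
    (∀ f : S →₀ L, expBracket f f ∈ I) ∧
    (∀ f g h : S →₀ L,
      expBracket f (expBracket g h) + expBracket g (expBracket h f) +
        expBracket h (expBracket f g) ∈ I) := by
  intro I
  have hz' : ∀ a : S, a * z = z := fun a => by rw [mul_comm]; exact hz a
  have hI0 : (0 : S →₀ L) ∈ I := ⟨0, by simp⟩
  have hIadd : ∀ f g : S →₀ L, f ∈ I → g ∈ I → f + g ∈ I := by
    rintro _ _ ⟨x, rfl⟩ ⟨y, rfl⟩
    exact ⟨x + y, by rw [Finsupp.single_add]⟩
  have hIneg : ∀ f : S →₀ L, f ∈ I → -f ∈ I := by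
    rintro _ ⟨x, rfl⟩
    exact ⟨-x, by rw [Finsupp.single_neg]⟩
  -- the ideal property
  have hleft : ∀ (f : S →₀ L) (y : L), expBracket f (Finsupp.single z y) ∈ I := by
    intro f y
    refine ⟨f.sum fun a x => ⁅x, y⁆, ?_⟩
    unfold expBracket
    rw [Finsupp.single_sum]
    apply Finsupp.sum_congr
    intro a _
    rw [Finsupp.sum_single_index (by simp), hz' a]
  have hright : ∀ (f : S →₀ L) (y : L), expBracket (Finsupp.single z y) f ∈ I := by
    intro f y
    have h := expB_antisym (Finsupp.single z y) f
    have : expBracket (Finsupp.single z y) f = -expBracket f (Finsupp.single z y) :=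
      eq_neg_of_add_eq_zero_left h
    rw [this]
    exact hIneg _ (hleft f y)
  refine ⟨?_, ?_, ?_, ?_⟩
  · rintro f g ⟨y, rfl⟩
    exact ⟨hleft f y, hright f y⟩
  · intro f₁ f₂ g₁ g₂ hf hg
    obtain ⟨u, hu⟩ := hf
    obtain ⟨v, hv⟩ := hg
    have hf1 : f₁ = f₂ + Finsupp.single z u := by rw [← hu]; abel
    have hg1 : g₁ = g₂ + Finsupp.single z v := by rw [← hv]; abel
    rw [hf1, hg1, expB_add_left, expB_add_right, expB_add_right]
    have : expBracket f₂ g₂ + expBracket f₂ (Finsupp.single z v) +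
        (expBracket (Finsupp.single z u) g₂ +
          expBracket (Finsupp.single z u) (Finsupp.single z v)) - expBracket f₂ g₂ =
        expBracket f₂ (Finsupp.single z v) + (expBracket (Finsupp.single z u) g₂ +
          expBracket (Finsupp.single z u) (Finsupp.single z v)) := by abel
    rw [this]
    exact hIadd _ _ (hleft f₂ v) (hIadd _ _ (hright g₂ u) (hleft _ v))
  · intro f
    rw [expB_self]
    exact hI0
  · -- Jacobi
    intro f g h
    suffices hJ : expBracket f (expBracket g h) + expBracket g (expBracket h f) +
        expBracket h (expBracket f g) = 0 by rw [hJ]; exact hI0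
    induction f using Finsupp.induction with
    | zero => simp [expB_zero_left, expB_zero_right, expB_add_right]
    | single_add a x f' _ _ ihf =>
      rw [expB_add_left, expB_add_right, expB_add_left, expB_add_right, expB_add_right]
      have hre : ∀ A B C D E F : S →₀ L,
          A + B + (C + D) + (E + F) = (A + C + E) + (B + D + F) := by
        intro A B C D E F; abel
      rw [hre, ihf, add_zero]
      clear ihf hre
      induction g using Finsupp.induction with
      | zero => simp [expB_zero_left, expB_zero_right, expB_add_right]
      | single_add b y g' _ _ ihg =>
        rw [expB_add_left, expB_add_right, expB_add_left, expB_add_right, expB_add_right]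
        have hre : ∀ A B C D E F : S →₀ L,
            A + B + (C + D) + (E + F) = (A + C + E) + (B + D + F) := by
          intro A B C D E F; abel
        rw [hre, ihg, add_zero]
        clear ihg hre
        induction h using Finsupp.induction with
        | zero => simp [expB_zero_left, expB_zero_right, expB_add_right]
        | single_add c w h' _ _ ihh =>
          rw [expB_add_left, expB_add_right, expB_add_left, expB_add_right, expB_add_right]
          have hre : ∀ A B C D E F : S →₀ L,
              A + B + (C + D) + (E + F) = (A + C + E) + (B + D + F) := by
            intro A B C D E F; abel
          rw [hre, ihh, add_zero]
          rw [expB_single_single, expB_single_single, expB_single_single,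
            expB_single_single, expB_single_single, expB_single_single]
          have e1 : b * (c * a) = a * (b * c) := by
            simp [mul_comm, mul_assoc, mul_left_comm]
          have e2 : c * (a * b) = a * (b * c) := by
            simp [mul_comm, mul_assoc, mul_left_comm]
          rw [e1, e2, ← Finsupp.single_add, ← Finsupp.single_add]
          have : ⁅x, ⁅y, w⁆⁆ + ⁅y, ⁅w, x⁆⁆ + ⁅w, ⁅x, y⁆⁆ = 0 := lie_jacobi x y w
          rw [this, Finsupp.single_zero]
end

section
/- Let g = so(D−1,2) with generators J_ab (Lorentz) and P_a (AdS boosts) satisfying [P_a,P_b] = J_ab, [J_ab,P_c] = η_cb P_a − η_ca P_b, and the standard Lorentz brackets. Performing the S_S2-expansion with resonant partition S0 = {λ0, λ2}, S1 = {λ1} and setting J̃_ab = λ0⊗J_ab, Z̃_ab = λ2⊗J_ab, P̃_a = λ1⊗P_a yields the brackets [J̃_ab, J̃_cd] = Lorentz-type in J̃, [P̃_a, P̃_b] = Z̃_ab, [J̃_ab, P̃_c] = η_bc P̃_a − η_ac P̃_b, [J̃_ab, Z̃_cd] = Lorentz-type in Z̃, [Z̃_ab, P̃_c] = η_bc P̃_a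 − η_ac P̃_b, [Z̃_ab, Z̃_cd] = Lorentz-type in Z̃. -/
/-- The three-element set `{λ0, λ1, λ2}`. -/
inductive S2 : Type
  | l0 | l1 | l2
  deriving DecidableEq

instance : Fintype S2 where
  elems := {S2.l0, S2.l1, S2.l2}
  complete := by intro x; cases x <;> simp

/-- The multiplication of the commutative monoid `S_S2` (`λ0` is the identity,
`λ1·λ1 = λ2`, `λ1·λ2 = λ1`, `λ2·λ2 = λ2`). -/
def S2.mul : S2 → S2 → S2
  | .l0, a => a
  | a, .l0 => a
  | .l1, .l1 => .l2
  | .l1, .l2 => .l1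
  | .l2, .l1 => .l1
  | .l2, .l2 => .l2

instance : CommMonoid S2 where
  mul := S2.mul
  one := S2.l0
  mul_assoc := by decide
  one_mul := by decide
  mul_one := by decide
  mul_comm := by decide

/-- The Minkowski metric components `η_ab`. -/
def eta (D : ℕ) (a b : Fin D) : ℝ :=
  if a = b then (if (a : ℕ) = 0 then -1 else 1) else 0

lemma expBracket_single {S : Type*} [Mul S] {L : Type*} [LieRing L]
    (a b : S) (x y : L) :
    expBracket (Finsupp.single a x) (Finsupp.single b y) =
      Finsupp.single (a * b) ⁅x, y⁆ := by
  unfold expBracket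
  rw [Finsupp.sum_single_index, Finsupp.sum_single_index]
  · simp
  · rw [Finsupp.sum_single_index] <;> simp

lemma eta_symm (D : ℕ) (a b : Fin D) : eta D a b = eta D b a := by
  unfold eta
  rcases eq_or_ne a b with h | h
  · subst h; rfl
  · rw [if_neg h, if_neg (Ne.symm h)]

/-- The `S_S2`-expansion of the AdS algebra: setting `J̃_ab = λ0⊗J_ab`,
`Z̃_ab = λ2⊗J_ab`, `P̃_a = λ1⊗P_a` yields the SSEP brackets. -/
theorem S2_expansion_of_AdS (D : ℕ) (𝔤 : Type*) [LieRing 𝔤] [LieAlgebra ℝ 𝔤]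
    (J : Fin D → Fin D → 𝔤) (P : Fin D → 𝔤)
    (hJanti : ∀ i j, J i j = -J j i)
    (hJJ : ∀ i j k l, ⁅J i j, J k l⁆ =
      eta D i l • J j k + eta D j k • J i l - eta D i k • J j l - eta D j l • J i k)
    (hJP : ∀ i j k, ⁅J i j, P k⁆ = eta D k j • P i - eta D k i • P j)
    (hPP : ∀ i j, ⁅P i, P j⁆ = J i j) :
    let Jt : Fin D → Fin D → (S2 →₀ 𝔤) := fun i j => Finsupp.single S2.l0 (J i j)
    let Zt : Fin D → Fin D → (S2 →₀ 𝔤) := fun i j => Finsupp.single S2.l2 (J i j)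
    let Pt : Fin D → (S2 →₀ 𝔤) := fun i => Finsupp.single S2.l1 (P i)
    (∀ i j k l, expBracket (Jt i j) (Jt k l) =
      eta D i l • Jt j k + eta D j k • Jt i l - eta D i k • Jt j l - eta D j l • Jt i k) ∧
    (∀ i j, expBracket (Pt i) (Pt j) = Zt i j) ∧
    (∀ i j k, expBracket (Jt i j) (Pt k) = eta D j k • Pt i - eta D i k • Pt j) ∧
    (∀ i j k l, expBracket (Jt i j) (Zt k l) =
      eta D i l • Zt j k + eta D j k • Zt i l - eta D i k • Zt j l - eta D j l • Zt i k) ∧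
    (∀ i j k, expBracket (Zt i j) (Pt k) = eta D j k • Pt i - eta D i k • Pt j) ∧
    (∀ i j k l, expBracket (Zt i j) (Zt k l) =
      eta D i l • Zt j k + eta D j k • Zt i l - eta D i k • Zt j l - eta D j l • Zt i k) := by
  intro Jt Zt Pt
  have hmul : ∀ a b : S2, a * b = S2.mul a b := fun _ _ => rfl
  refine ⟨?_, ?_, ?_, ?_, ?_, ?_⟩
  · intro i j k l
    simp only [Jt, expBracket_single, hmul, S2.mul, hJJ, Finsupp.single_add,
      Finsupp.single_sub, Finsupp.smul_single]
  · intro i j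
    simp only [Pt, Zt, expBracket_single, hmul, S2.mul, hPP]
  · intro i j k
    simp only [Jt, Pt, expBracket_single, hmul, S2.mul, hJP,
      Finsupp.single_sub, Finsupp.smul_single, eta_symm D k]
  · intro i j k l
    simp only [Jt, Zt, expBracket_single, hmul, S2.mul, hJJ, Finsupp.single_add,
      Finsupp.single_sub, Finsupp.smul_single]
  · intro i j k
    simp only [Jt, Zt, Pt, expBracket_single, hmul, S2.mul, hJP,
      Finsupp.single_sub, Finsupp.smul_single, eta_symm D k]
  · intro i j k l
    simp only [Zt, expBracket_single, hmul, S2.mul, hJJ, Finsupp.single_add,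
      Finsupp.single_sub, Finsupp.smul_single]
end
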